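/- Let L be a nonzero finite-dimensional k-subspace of a field extension K of k, and let L̄ denote the set of all elements f ∈ K satisfying an equation fᵐ + a₁f^{m−1} + ⋯ + a_m = 0 with m > 0 and a_i ∈ Lⁱ for each i. Then L̄ is a k-vector subspace of K containing L. -/

import Mathlib

open Polynomial

/-- Let `L` be a nonzero finite-dimensional `k`-subspace of a field
extension `K` of `k`, and let `L̄` be the set of `f ∈ K` satisfying an equation
`fᵐ + a₁ f^{m-1} + ⋯ + a_m = 0` with `m > 0` and `a_i ∈ Lⁱ`. Then `L̄` is a `k`-vector
subspace of `K` containing `L`. -/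
theorem completion_is_subspace
    (k K : Type*) [Field k] [Field K] [Algebra k K]
    (L : Submodule k K) (hL : L ≠ ⊥) (hfin : FiniteDimensional k L) :
    ∃ S : Submodule k K,
      (S : Set K) = {f : K | ∃ m : ℕ, 0 < m ∧ ∃ a : ℕ → K,
        (∀ i ∈ Finset.Icc 1 m, a i ∈ L ^ i) ∧
        f ^ m + ∑ i ∈ Finset.Icc 1 m, a i * f ^ (m - i) = 0} ∧
      L ≤ S := by
  classical
  -- The "Rees algebra" `A = ⨁ Lⁱ Xⁱ ⊆ K[X]`, generated by `L·X`.
  set A : Subalgebra k K[X] := Algebra.adjoin k ((fun c : K => C c * X) '' (L : Set K))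
    with hA
  -- Elements of `Lⁱ·Xⁱ` belong to `A`.
  have hmem : ∀ (i : ℕ) (c : K), c ∈ L ^ i → C c * X ^ i ∈ A := by
    intro i
    induction i with
    | zero =>
      intro c hc
      rw [pow_zero] at hc
      obtain ⟨y, hy⟩ := (Submodule.mem_one).1 hc
      rw [pow_zero, mul_one, ← hy]
      exact A.algebraMap_mem y
    | succ n ih =>
      intro c hc
      rw [pow_succ] at hc
      refine Submodule.mul_induction_on hc ?_ ?_
      · intro a ha b hb
        have : C (a * b) * X ^ (n + 1) = (C a * X ^ n) * (C b * X) := by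
          rw [map_mul]; ring
        rw [this]
        exact mul_mem (ih a ha) (Algebra.subset_adjoin ⟨b, hb, rfl⟩)
      · intro x y hx hy
        have : C (x + y) * X ^ (n + 1) = C x * X ^ (n + 1) + C y * X ^ (n + 1) := by
          rw [map_add, add_mul]
        rw [this]
        exact add_mem hx hy
  -- Conversely, the `i`-th coefficient of any element of `A` lies in `Lⁱ`.
  have hcoeff : ∀ p ∈ A, ∀ i, p.coeff i ∈ L ^ i := by
    intro p hp
    induction hp using Algebra.adjoin_induction with
    | mem x hx =>
      obtain ⟨c, hc, rfl⟩ := hx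
      intro i
      by_cases h1 : i = 1
      · subst h1
        simpa [coeff_C_mul, coeff_X, pow_one] using hc
      · have h2 : ¬(1 = i) := fun h => h1 h.symm
        simp [coeff_C_mul, coeff_X, h2]
    | algebraMap r =>
      intro i
      cases i with
      | zero =>
        rw [pow_zero]
        have : (algebraMap k K[X] r).coeff 0 = algebraMap k K r := by
          simp [Polynomial.algebraMap_apply]
        rw [this]
        exact (Submodule.mem_one).2 ⟨r, rfl⟩
      | succ n =>
        have : (algebraMap k K[X] r).coeff (n + 1) = 0 := by
          simp [Polynomial.algebraMap_apply]
        rw [this]; exact zero_mem _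
    | add x y hx hy ihx ihy =>
      intro i
      simpa [coeff_add] using add_mem (ihx i) (ihy i)
    | mul x y hx hy ihx ihy =>
      intro i
      rw [coeff_mul]
      refine sum_mem ?_
      rintro ⟨j, l⟩ hjl
      have hjl' : j + l = i := Finset.HasAntidiagonal.mem_antidiagonal.1 hjl
      have : x.coeff j * y.coeff l ∈ L ^ j * L ^ l :=
        Submodule.mul_mem_mul (ihx j) (ihy l)
      rwa [← pow_add, hjl'] at this
  -- The candidate subspace: `f` such that `f·X` is integral over `A`.
  refine ⟨{ carrier := {f : K | C f * X ∈ integralClosure A K[X]}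
            add_mem' := ?_
            zero_mem' := ?_
            smul_mem' := ?_ }, ?_, ?_⟩
  · intro a b ha hb
    have : C (a + b) * X = C a * X + C b * X := by rw [map_add, add_mul]
    simp only [Set.mem_setOf_eq] at ha hb ⊢
    rw [this]
    exact add_mem ha hb
  · simp only [Set.mem_setOf_eq, map_zero, zero_mul]
    exact zero_mem _
  · intro c f hf
    simp only [Set.mem_setOf_eq] at hf ⊢
    have h1 : C (c • f) * X = algebraMap k K[X] c * (C f * X) := by
      rw [Algebra.smul_def, map_mul, Polynomial.algebraMap_apply]
      ring
    rw [h1]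
    have h2 : algebraMap k K[X] c ∈ integralClosure A K[X] := by
      have : algebraMap k K[X] c ∈ A := A.algebraMap_mem c
      exact (integralClosure A K[X]).algebraMap_mem ⟨_, this⟩
    exact mul_mem h2 hf
  · -- set equality
    ext f
    simp only [SetLike.mem_coe, Set.mem_setOf_eq, Submodule.mem_mk, AddSubmonoid.mem_mk,
      AddSubsemigroup.mem_mk]
    constructor
    · -- integral ⇒ equation
      rintro hx
      obtain ⟨q, hq, hqe⟩ := hx
      set m := q.natDegree with hm
      have hm0 : 0 < m := by
        rcases Nat.eq_zero_or_pos m with h | h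
        · exfalso
          have : q = 1 := Polynomial.Monic.natDegree_eq_zero hq |>.1 h
          rw [this] at hqe
          simp at hqe
        · exact h
      rw [eval₂_eq_sum_range] at hqe
      -- take the coefficient of `X^m`
      have hco := congrArg (fun p : K[X] => p.coeff m) hqe
      simp only [finset_sum_coeff, coeff_zero] at hco
      have hterm : ∀ j ∈ Finset.range (m + 1),
          ((algebraMap A K[X] (q.coeff j)) * (C f * X) ^ j).coeff m
            = ((q.coeff j : K[X])).coeff (m - j) * f ^ j := by
        intro j hj
        have hjm : j ≤ m := Nat.lt_succ_iff.1 (Finset.mem_range.1 hj)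
        have : (C f * X) ^ j = C (f ^ j) * X ^ j := by
          rw [mul_pow, ← C_pow]
        rw [this, ← mul_assoc, coeff_mul_X_pow', if_pos hjm, coeff_mul_C]
        rfl
      rw [Finset.sum_congr rfl hterm] at hco
      rw [Finset.sum_range_succ] at hco
      have htop : ((q.coeff m : K[X])).coeff (m - m) * f ^ m = f ^ m := by
        have h1 : q.coeff m = 1 := hq.coeff_natDegree
        rw [h1, Nat.sub_self]
        simp
      rw [htop] at hco
      refine ⟨m, hm0, fun i => ((q.coeff (m - i) : K[X])).coeff i, ?_, ?_⟩
      · intro i hi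
        exact hcoeff _ (q.coeff (m - i)).2 i
      · rw [add_comm] at hco
        rw [← hco]
        congr 1
        refine Finset.sum_nbij' (fun i => m - i) (fun j => m - j) ?_ ?_ ?_ ?_ ?_
        · intro i hi
          have hi' := Finset.mem_Icc.1 hi
          try dsimp only
          exact Finset.mem_range.2 (by omega)
        · intro j hj
          have hj' : j < m := Finset.mem_range.1 hj
          try dsimp only
          exact Finset.mem_Icc.2 ⟨by omega, by omega⟩
        · intro i hi
          have hi' := Finset.mem_Icc.1 hi
          try dsimp only
          omega
        · intro j hj
          have hj' : j < m := Finset.mem_range.1 hj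
          try dsimp only
          omega
        · intro i hi
          have hi' := Finset.mem_Icc.1 hi
          dsimp only
          have h1 : m - (m - i) = i := by omega
          rw [h1]
    · -- equation ⇒ integral
      rintro ⟨m, hm0, a, ha, heq⟩
      set b : ℕ → A := fun i =>
        if h : i ∈ Finset.Icc 1 m then ⟨C (a i) * X ^ i, hmem i (a i) (ha i h)⟩ else 0
        with hb
      refine ⟨Polynomial.X ^ m + ∑ i ∈ Finset.Icc 1 m,
        Polynomial.C (b i) * Polynomial.X ^ (m - i), ?_, ?_⟩
      · refine monic_X_pow_add ?_
        refine lt_of_le_of_lt (degree_sum_le _ _) ?_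
        refine (Finset.sup_lt_iff (by exact_mod_cast WithBot.bot_lt_coe m)).2 ?_
        intro i hi
        have hi' := Finset.mem_Icc.1 hi
        refine lt_of_le_of_lt (degree_C_mul_X_pow_le _ _) ?_
        exact_mod_cast Nat.sub_lt hm0 hi'.1
      · rw [eval₂_add, eval₂_pow, eval₂_X, eval₂_finset_sum]
        have hterm : ∀ i ∈ Finset.Icc 1 m,
            eval₂ (algebraMap A K[X]) (C f * X) (Polynomial.C (b i) * Polynomial.X ^ (m - i))
              = C (a i * f ^ (m - i)) * X ^ m := by
          intro i hi
          have hi' := Finset.mem_Icc.1 hi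
          rw [eval₂_mul, eval₂_C, eval₂_pow, eval₂_X]
          have hbi : (algebraMap A K[X]) (b i) = C (a i) * X ^ i := by
            rw [hb]; simp only [dif_pos hi]; rfl
          rw [hbi]
          have : (C f * X) ^ (m - i) = C (f ^ (m - i)) * X ^ (m - i) := by
            rw [mul_pow, ← C_pow]
          rw [this]
          have hX : (X : K[X]) ^ i * X ^ (m - i) = X ^ m := by
            rw [← pow_add]
            congr 1
            omega
          rw [map_mul]
          calc C (a i) * X ^ i * (C (f ^ (m - i)) * X ^ (m - i))
              = C (a i) * C (f ^ (m - i)) * (X ^ i * X ^ (m - i)) := by ring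
            _ = C (a i) * C (f ^ (m - i)) * X ^ m := by rw [hX]
        rw [Finset.sum_congr rfl hterm]
        have hCX : (C f * X) ^ m = C (f ^ m) * X ^ m := by rw [mul_pow, ← C_pow]
        rw [hCX, ← Finset.sum_mul, ← map_sum C, ← add_mul, ← map_add, heq, map_zero, zero_mul]
  · -- L ≤ S
    intro f hf
    have : C f * X ∈ A := Algebra.subset_adjoin ⟨f, hf, rfl⟩
    have : C f * X ∈ integralClosure A K[X] :=
      (integralClosure A K[X]).algebraMap_mem ⟨_, this⟩
    exact this
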